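/- Suppose f : [p₀,0] → ℝ is twice continuously differentiable with λ²·(a³f')' = μ·a·f on [p₀,0] and f(p₀) = 0, and h : [p₀,0] → ℝ is twice continuously differentiable with λ²·(a³h')' − μ·a·h = −2λ·(a³f')' on [p₀,0] and h(p₀) = h'(p₀) = 0. Then λ·a(0)³·(f(0)·h'(0) − f'(0)·h(0)) = −2·a(0)³·f(0)·f'(0) + 2·∫_{p₀}^0 a(p)³·f'(p)² dp. -/

import Mathlib

open Real Set

/-- Derivative within the interval [p₀, 0]. -/
noncomputable def dI (p₀ : ℝ) (f : ℝ → ℝ) : ℝ → ℝ :=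
  derivWithin f (Set.Icc p₀ 0)

/-- If f solves λ²·(a³f')' = μ·a·f on [p₀,0] with f(p₀) = 0, and h solves
λ²·(a³h')' − μ·a·h = −2λ·(a³f')' with h(p₀) = h'(p₀) = 0, then
λ·a(0)³·(f(0)·h'(0) − f'(0)·h(0)) = −2·a(0)³·f(0)·f'(0) + 2·∫_{p₀}^0 a³·f'². -/
theorem lambda_derivative_wronskian_identity
    (p₀ lam μ : ℝ) (hp₀ : p₀ < 0) (hlam : 0 < lam)
    (a : ℝ → ℝ) (ha : ContDiffOn ℝ 1 a (Icc p₀ 0))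
    (hapos : ∀ p ∈ Icc p₀ 0, 0 < a p)
    (f h : ℝ → ℝ)
    (hf : ContDiffOn ℝ 2 f (Icc p₀ 0)) (hh : ContDiffOn ℝ 2 h (Icc p₀ 0))
    (hfe : ∀ p ∈ Icc p₀ 0,
      lam ^ 2 * dI p₀ (fun q => a q ^ 3 * dI p₀ f q) p = μ * a p * f p)
    (hf0 : f p₀ = 0)
    (hhe : ∀ p ∈ Icc p₀ 0,
      lam ^ 2 * dI p₀ (fun q => a q ^ 3 * dI p₀ h q) p - μ * a p * h p
        = -2 * lam * dI p₀ (fun q => a q ^ 3 * dI p₀ f q) p)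
    (hh0 : h p₀ = 0) (hh'0 : dI p₀ h p₀ = 0) :
    lam * a 0 ^ 3 * (f 0 * dI p₀ h 0 - dI p₀ f 0 * h 0)
      = -2 * a 0 ^ 3 * f 0 * dI p₀ f 0
        + 2 * ∫ p in p₀..(0:ℝ), a p ^ 3 * (dI p₀ f p) ^ 2 := by
  have hp : p₀ ≤ (0:ℝ) := hp₀.le
  have hlne : lam ≠ 0 := hlam.ne'
  have hU : UniqueDiffOn ℝ (Icc p₀ (0:ℝ)) := uniqueDiffOn_Icc hp₀
  have hpmem : p₀ ∈ Icc p₀ (0:ℝ) := ⟨le_rfl, hp⟩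
  simp only [dI] at hfe hhe hh'0 ⊢
  have haD : DifferentiableOn ℝ a (Icc p₀ 0) := ha.differentiableOn (by norm_num)
  have hfD : DifferentiableOn ℝ f (Icc p₀ 0) := hf.differentiableOn (by norm_num)
  have hhD : DifferentiableOn ℝ h (Icc p₀ 0) := hh.differentiableOn (by norm_num)
  have hf'C : ContDiffOn ℝ 1 (derivWithin f (Icc p₀ 0)) (Icc p₀ 0) :=
    hf.derivWithin hU (by norm_num)
  have hh'C : ContDiffOn ℝ 1 (derivWithin h (Icc p₀ 0)) (Icc p₀ 0) :=
    hh.derivWithin hU (by norm_num)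
  have hf'D : DifferentiableOn ℝ (derivWithin f (Icc p₀ 0)) (Icc p₀ 0) :=
    hf'C.differentiableOn (by norm_num)
  have hh'D : DifferentiableOn ℝ (derivWithin h (Icc p₀ 0)) (Icc p₀ 0) :=
    hh'C.differentiableOn (by norm_num)
  set u : ℝ → ℝ := fun q => a q ^ 3 * derivWithin f (Icc p₀ 0) q with hu
  set v : ℝ → ℝ := fun q => a q ^ 3 * derivWithin h (Icc p₀ 0) q with hv
  have huD : DifferentiableOn ℝ u (Icc p₀ 0) := (haD.pow 3).mul hf'D
  have hvD : DifferentiableOn ℝ v (Icc p₀ 0) := (haD.pow 3).mul hh'D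
  set F : ℝ → ℝ := fun p => lam * (f p * v p - h p * u p) + 2 * (f p * u p) with hF
  have key : ∀ p ∈ Icc p₀ (0:ℝ),
      HasDerivWithinAt F (2 * (a p ^ 3 * (derivWithin f (Icc p₀ 0) p) ^ 2)) (Icc p₀ 0) p := by
    intro p hpm
    have hfp : HasDerivWithinAt f (derivWithin f (Icc p₀ 0) p) (Icc p₀ 0) p :=
      (hfD p hpm).hasDerivWithinAt
    have hhp : HasDerivWithinAt h (derivWithin h (Icc p₀ 0) p) (Icc p₀ 0) p :=
      (hhD p hpm).hasDerivWithinAt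
    have hup : HasDerivWithinAt u (derivWithin u (Icc p₀ 0) p) (Icc p₀ 0) p :=
      (huD p hpm).hasDerivWithinAt
    have hvp : HasDerivWithinAt v (derivWithin v (Icc p₀ 0) p) (Icc p₀ 0) p :=
      (hvD p hpm).hasDerivWithinAt
    have hW : HasDerivWithinAt F
        (lam * ((derivWithin f (Icc p₀ 0) p * v p + f p * derivWithin v (Icc p₀ 0) p)
            - (derivWithin h (Icc p₀ 0) p * u p + h p * derivWithin u (Icc p₀ 0) p))
          + 2 * (derivWithin f (Icc p₀ 0) p * u p + f p * derivWithin u (Icc p₀ 0) p))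
        (Icc p₀ 0) p :=
      (((hfp.mul hvp).sub (hhp.mul hup)).const_mul lam).add ((hfp.mul hup).const_mul 2)
    convert hW using 1
    have e1 := hfe p hpm
    have e2 := hhe p hpm
    have u'eq : derivWithin u (Icc p₀ 0) p = μ * a p * f p / lam ^ 2 := by
      field_simp
      linarith
    have v'eq : derivWithin v (Icc p₀ 0) p
        = (μ * a p * h p - 2 * lam * derivWithin u (Icc p₀ 0) p) / lam ^ 2 := by
      field_simp
      linarith
    rw [v'eq, u'eq]
    simp only [hu, hv]
    field_simp
    ring
  have hcontF : ContinuousOn F (Icc p₀ 0) := fun x hx => (key x hx).continuousWithinAt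
  have hg'cont : ContinuousOn (fun p => 2 * (a p ^ 3 * (derivWithin f (Icc p₀ 0) p) ^ 2))
      (Icc p₀ 0) :=
    continuousOn_const.mul ((ha.continuousOn.pow 3).mul (hf'C.continuousOn.pow 2))
  have hFTC : (∫ p in p₀..(0:ℝ), 2 * (a p ^ 3 * (derivWithin f (Icc p₀ 0) p) ^ 2))
      = F 0 - F p₀ := by
    refine intervalIntegral.integral_eq_sub_of_hasDeriv_right_of_le hp hcontF
      (fun x hx => ?_) ?_
    · exact ((key x (Ioo_subset_Icc_self hx)).hasDerivAt
        (Icc_mem_nhds hx.1 hx.2)).hasDerivWithinAt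
    · exact (hg'cont.mono (by rw [uIcc_of_le hp])).intervalIntegrable
  have hFp0 : F p₀ = 0 := by
    simp [hF, hu, hv, hf0, hh0, hh'0]
  have h2int : (2:ℝ) * ∫ p in p₀..(0:ℝ), a p ^ 3 * (derivWithin f (Icc p₀ 0) p) ^ 2 = F 0 := by
    rw [← intervalIntegral.integral_const_mul, hFTC, hFp0, sub_zero]
  rw [h2int]
  simp only [hF, hu, hv]
  ring
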